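/- Let A be a k×n real matrix and define detlb(A) = max_{1 ≤ t ≤ k} (Δ_t(A))^{1/t}, where Δ_t(A) is the maximum absolute value of determinants of t×t submatrices of A. Then detlb(A) ≤ ‖A‖_max · √(r(A)) and detlb(A) ≤ ‖A‖₁, where ‖A‖_max = max_{i,j} |A_{ij}|, r(A) is the maximum number of nonzero entries in a row of A, and ‖A‖₁ = max_i ∑_j |A_{ij}| is the maximum ℓ₁-norm of a row of A. -/

import Mathlib

open Matrix
open scoped Classical RealInnerProductSpace

lemma hadamard_ineq {t : ℕ} (M : Matrix (Fin t) (Fin t) ℝ) :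
    |M.det| ≤ ∏ i, Real.sqrt (∑ j, M i j ^ 2) := by
  have h : Module.finrank ℝ (EuclideanSpace ℝ (Fin t)) = Fintype.card (Fin t) := by
    simp
  set f : Fin t → EuclideanSpace ℝ (Fin t) := fun i => (WithLp.equiv 2 _).symm (M i) with hf
  have wf : WellFoundedLT (Fin t) := inferInstance
  set gs := InnerProductSpace.gramSchmidtOrthonormalBasis h f with hgs
  set b := EuclideanSpace.basisFun (Fin t) ℝ with hb
  have hMf : b.toBasis.toMatrix f = M.transpose := by
    ext i j
    simp only [Module.Basis.toMatrix_apply, Matrix.transpose_apply]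
    rfl
  have hsplit : M.transpose = b.toBasis.toMatrix gs.toBasis * gs.toBasis.toMatrix f := by
    rw [Module.Basis.toMatrix_mul_toMatrix, hMf]
  have hdet : |M.det| = |(b.toBasis.toMatrix gs.toBasis).det| * |(gs.toBasis.toMatrix f).det| := by
    rw [← Matrix.det_transpose M, hsplit, Matrix.det_mul, abs_mul]
  have h1 : |(b.toBasis.toMatrix gs.toBasis).det| = 1 := by
    have := b.det_to_matrix_orthonormalBasis gs
    rwa [Module.Basis.det_apply, Real.norm_eq_abs, ← OrthonormalBasis.coe_toBasis gs] at this
  have h2 : (gs.toBasis.toMatrix f).det = ∏ i, ⟪gs i, f i⟫ := by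
    rw [← Module.Basis.det_apply, InnerProductSpace.gramSchmidtOrthonormalBasis_det]
  rw [hdet, h1, one_mul, h2]
  calc |∏ i, ⟪gs i, f i⟫| ≤ ∏ i, |⟪gs i, f i⟫| := Finset.abs_prod _ _ |>.le
    _ ≤ ∏ i, Real.sqrt (∑ j, M i j ^ 2) := by
        apply Finset.prod_le_prod (fun i _ => abs_nonneg _)
        intro i _
        have := abs_real_inner_le_norm (gs i) (f i)
        have hg : ‖gs i‖ = 1 := gs.orthonormal.1 i
        rw [hg, one_mul] at this
        refine this.trans_eq ?_
        rw [EuclideanSpace.norm_eq]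
        congr 1
        apply Finset.sum_congr rfl
        intro j _
        rw [Real.norm_eq_abs, sq_abs]
        rfl

lemma root_le_of_le_pow {d B : ℝ} {t : ℕ} (ht : 1 ≤ t) (hd : 0 ≤ d) (hB : 0 ≤ B)
    (h : d ≤ B ^ t) : d ^ ((1 : ℝ) / t) ≤ B := by
  have ht' : (t : ℝ) ≠ 0 := Nat.cast_ne_zero.mpr (by omega)
  calc d ^ ((1 : ℝ) / t) ≤ (B ^ t) ^ ((1 : ℝ) / t) :=
        Real.rpow_le_rpow hd h (by positivity)
    _ = B := by
        rw [← Real.rpow_natCast B t, ← Real.rpow_mul hB, mul_one_div, div_self ht',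
          Real.rpow_one]

noncomputable def detlb (k n : ℕ) (A : Matrix (Fin k) (Fin n) ℝ) : ℝ :=
  sSup {x : ℝ | ∃ t : ℕ, 1 ≤ t ∧ t ≤ k ∧
    ∃ (r : Fin t ↪ Fin k) (c : Fin t ↪ Fin n),
      x = |(A.submatrix r c).det| ^ ((1 : ℝ) / t)}


theorem detlb_le_bounds (k n : ℕ) (A : Matrix (Fin k) (Fin n) ℝ) :
    detlb k n A ≤ (⨆ i : Fin k, ⨆ j : Fin n, |A i j|) *
      Real.sqrt ((⨆ i : Fin k, (Finset.univ.filter fun j : Fin n => A i j ≠ 0).card : ℕ)) ∧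
    detlb k n A ≤ ⨆ i : Fin k, ∑ j, |A i j| := by
  set m := (⨆ i : Fin k, ⨆ j : Fin n, |A i j|) with hm
  set ρ : ℕ := ⨆ i : Fin k, (Finset.univ.filter fun j : Fin n => A i j ≠ 0).card with hρ
  have hm0 : 0 ≤ m := Real.iSup_nonneg fun i => Real.iSup_nonneg fun j => abs_nonneg _
  have hB1 : 0 ≤ m * Real.sqrt ρ := mul_nonneg hm0 (Real.sqrt_nonneg _)
  have hB2 : 0 ≤ ⨆ i : Fin k, ∑ j, |A i j| :=
    Real.iSup_nonneg fun i => Finset.sum_nonneg fun j _ => abs_nonneg _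
  have hmax : ∀ a b, |A a b| ≤ m := by
    intro a b
    have h1 : |A a b| ≤ ⨆ j, |A a j| :=
      le_ciSup (Set.Finite.bddAbove (Set.finite_range fun j => |A a j|)) b
    exact h1.trans
      (le_ciSup (Set.Finite.bddAbove (Set.finite_range fun i => ⨆ j, |A i j|)) a)
  have hρmax : ∀ a : Fin k, ((Finset.univ.filter fun j : Fin n => A a j ≠ 0).card : ℕ) ≤ ρ :=
    fun a => le_ciSup (Set.Finite.bddAbove (Set.finite_range
      fun i : Fin k => (Finset.univ.filter fun j : Fin n => A i j ≠ 0).card)) a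
  constructor
  · refine Real.sSup_le ?_ hB1
    rintro x ⟨t, ht1, htk, r, c, rfl⟩
    refine root_le_of_le_pow ht1 (abs_nonneg _) hB1 ?_
    calc |(A.submatrix r c).det| ≤ ∏ i, Real.sqrt (∑ j, (A.submatrix r c) i j ^ 2) :=
          hadamard_ineq _
      _ ≤ ∏ _i : Fin t, (m * Real.sqrt ρ) := by
          apply Finset.prod_le_prod (fun i _ => Real.sqrt_nonneg _)
          intro i _
          have hsum : ∑ j, (A.submatrix r c) i j ^ 2 ≤ (ρ : ℝ) * m ^ 2 := by
            set S := Finset.univ.filter fun j : Fin t => A (r i) (c j) ≠ 0 with hS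
            have h1 : ∑ j, (A.submatrix r c) i j ^ 2 = ∑ j ∈ S, A (r i) (c j) ^ 2 := by
              rw [Finset.sum_filter]
              apply Finset.sum_congr rfl
              intro j _
              by_cases hj : A (r i) (c j) = 0 <;> simp [hj, Matrix.submatrix_apply]
            have h2 : ∑ j ∈ S, A (r i) (c j) ^ 2 ≤ ∑ _j ∈ S, m ^ 2 := by
              apply Finset.sum_le_sum
              intro j _
              calc A (r i) (c j) ^ 2 = |A (r i) (c j)| ^ 2 := (sq_abs _).symm
                _ ≤ m ^ 2 := pow_le_pow_left₀ (abs_nonneg _) (hmax _ _) 2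
            have h3 : (S.card : ℝ) ≤ (ρ : ℝ) := by
              have hsub : S.map c ⊆ Finset.univ.filter fun j : Fin n => A (r i) j ≠ 0 := by
                intro j' hj'
                simp only [Finset.mem_map, hS, Finset.mem_filter, Finset.mem_univ,
                  true_and] at hj' ⊢
                obtain ⟨j, hj, rfl⟩ := hj'
                exact hj
              have := (Finset.card_le_card hsub).trans (hρmax (r i))
              rw [Finset.card_map] at this
              exact_mod_cast this
            calc ∑ j, (A.submatrix r c) i j ^ 2 ≤ ∑ _j ∈ S, m ^ 2 := h1 ▸ h2
              _ = (S.card : ℝ) * m ^ 2 := by rw [Finset.sum_const, nsmul_eq_mul]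
              _ ≤ (ρ : ℝ) * m ^ 2 := by
                  apply mul_le_mul_of_nonneg_right h3 (by positivity)
          calc Real.sqrt (∑ j, (A.submatrix r c) i j ^ 2) ≤ Real.sqrt ((ρ : ℝ) * m ^ 2) :=
                Real.sqrt_le_sqrt hsum
            _ = m * Real.sqrt ρ := by
                rw [Real.sqrt_mul (Nat.cast_nonneg _), Real.sqrt_sq hm0, mul_comm]
      _ = (m * Real.sqrt ρ) ^ t := by rw [Finset.prod_const, Finset.card_univ, Fintype.card_fin]
  · refine Real.sSup_le ?_ hB2
    rintro x ⟨t, ht1, htk, r, c, rfl⟩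
    refine root_le_of_le_pow ht1 (abs_nonneg _) hB2 ?_
    calc |(A.submatrix r c).det| ≤ ∏ i, Real.sqrt (∑ j, (A.submatrix r c) i j ^ 2) :=
          hadamard_ineq _
      _ ≤ ∏ _i : Fin t, (⨆ i : Fin k, ∑ j, |A i j|) := by
          apply Finset.prod_le_prod (fun i _ => Real.sqrt_nonneg _)
          intro i _
          have h1 : Real.sqrt (∑ j, (A.submatrix r c) i j ^ 2) ≤ ∑ j, |(A.submatrix r c) i j| := by
            rw [show ∑ j, (A.submatrix r c) i j ^ 2 = ∑ j, |(A.submatrix r c) i j| ^ 2 by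
              simp [sq_abs]]
            refine Real.sqrt_le_sqrt (Finset.sum_sq_le_sq_sum_of_nonneg
              fun j _ => abs_nonneg _) |>.trans ?_
            rw [Real.sqrt_sq (Finset.sum_nonneg fun j _ => abs_nonneg _)]
          have h2 : ∑ j, |(A.submatrix r c) i j| ≤ ∑ j, |A (r i) j| := by
            have : ∑ j : Fin t, |A (r i) (c j)| = ∑ j' ∈ Finset.univ.map c, |A (r i) j'| := by
              rw [Finset.sum_map]
            rw [show ∑ j, |(A.submatrix r c) i j| = ∑ j : Fin t, |A (r i) (c j)| from rfl, this]
            exact Finset.sum_le_sum_of_subset_of_nonneg (Finset.subset_univ _)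
              fun j' _ _ => abs_nonneg _
          have h3 : ∑ j, |A (r i) j| ≤ ⨆ i : Fin k, ∑ j, |A i j| :=
            le_ciSup (Set.Finite.bddAbove (Set.finite_range fun i : Fin k => ∑ j, |A i j|)) (r i)
          exact h1.trans (h2.trans h3)
      _ = (⨆ i : Fin k, ∑ j, |A i j|) ^ t := by
          rw [Finset.prod_const, Finset.card_univ, Fintype.card_fin]
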